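/- Let m be the minimum value of Γ(t+1) over t ≥ 0 (m ≈ 0.8856). For every integer n ≥ 3 and all real x > 0, y > 0 with y(n-1)² ≥ 2x, one has (2x/(y(n-1)²)) · ( r̃(x,y,n) − x^n ) ≤ ρ(x,y,n) ≤ (y(n-1)²/(2x)) · ( r̃(x,y,n) + ((1−m)/m)·x^n ). -/

import Mathlib

/-- The continuous-analogue Pochhammer symbol
`r̃(x,y,n) = Σ_{k=1}^{n} ((n-1)^{2(n-k)} / (2^{n-k} (n-k)!)) x^k y^{n-k}`,
with `r̃(x,y,0) = 1`. -/
noncomputable def rtilde (x y : ℝ) (n : ℕ) : ℝ :=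
  if n = 0 then 1 else
    ∑ k ∈ Finset.Icc 1 n,
      ((n : ℝ) - 1) ^ (2 * (n - k)) / (2 ^ (n - k) * (Nat.factorial (n - k) : ℝ))
        * x ^ k * y ^ (n - k)

/-- `E(x,z) = ∫_0^z x^t / Γ(t+1) dt` (with `x^t` the real power). -/
noncomputable def Efun (x z : ℝ) : ℝ :=
  ∫ t in (0 : ℝ)..z, x ^ t / Real.Gamma (t + 1)

/-- The second continuous analogue of the Pochhammer symbol:
`ρ(x,y,z) = x^z · E(y(z-1)²/(2x), z-1)`. -/
noncomputable def rho (x y z : ℝ) : ℝ :=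
  x ^ z * Efun (y * (z - 1) ^ 2 / (2 * x)) (z - 1)

open Real Set intervalIntegral

/-- Continuity of the integrand on `[0,∞)`. -/
lemma aux_contOn {u : ℝ} (hu : 0 < u) :
    ContinuousOn (fun t : ℝ => u ^ t / Real.Gamma (t + 1)) (Set.Ici (0 : ℝ)) := by
  apply ContinuousOn.div
  · exact fun t _ => (Real.continuousAt_const_rpow hu.ne').continuousWithinAt
  · intro t ht
    have h1 : (0 : ℝ) < t + 1 := by have := Set.mem_Ici.mp ht; linarith
    have hne : ∀ k : ℕ, t + 1 ≠ -k := by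
      intro k hE
      have : (0 : ℝ) ≤ (k : ℝ) := k.cast_nonneg
      rw [hE] at h1; linarith
    have hadd : ContinuousAt (fun s : ℝ => s + 1) t := by fun_prop
    exact (ContinuousAt.comp (g := Real.Gamma) (f := fun s : ℝ => s + 1) (x := t)
      (Real.differentiableAt_Gamma hne).continuousAt hadd).continuousWithinAt
  · intro t ht
    have h1 : (0 : ℝ) < t + 1 := by have := Set.mem_Ici.mp ht; linarith
    exact (Real.Gamma_pos_of_pos h1).ne'

lemma aux_integrable {u : ℝ} (hu : 0 < u) {a b : ℝ} (ha : 0 ≤ a) (hab : a ≤ b) :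
    IntervalIntegrable (fun t : ℝ => u ^ t / Real.Gamma (t + 1)) MeasureTheory.volume a b := by
  apply ContinuousOn.intervalIntegrable
  rw [Set.uIcc_of_le hab]
  exact (aux_contOn hu).mono (fun t ht => le_trans ha ht.1)

lemma Gamma_le_fact (j : ℕ) {t : ℝ} (h1 : (j : ℝ) ≤ t) (h2 : t ≤ (j : ℝ) + 1) :
    Real.Gamma (t + 1) ≤ (Nat.factorial (j + 1) : ℝ) := by
  have hj0 : (0 : ℝ) < (j : ℝ) + 1 := by positivity
  have hmem1 : ((j : ℝ) + 1) ∈ Set.Ioi (0 : ℝ) := hj0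
  have hmem2 : ((j : ℝ) + 2) ∈ Set.Ioi (0 : ℝ) := by norm_num; positivity
  have hseg : t + 1 ∈ segment ℝ ((j : ℝ) + 1) ((j : ℝ) + 2) := by
    rw [segment_eq_Icc (by linarith)]
    constructor <;> linarith
  have := Real.convexOn_Gamma.le_on_segment hmem1 hmem2 hseg
  have e1 : Real.Gamma ((j : ℝ) + 1) = (Nat.factorial j : ℝ) := Real.Gamma_nat_eq_factorial j
  have e2 : Real.Gamma ((j : ℝ) + 2) = (Nat.factorial (j + 1) : ℝ) := by
    have := Real.Gamma_nat_eq_factorial (j + 1)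
    push_cast at this ⊢
    convert this using 2
    ring
  rw [e1, e2] at this
  refine le_trans this (max_le ?_ le_rfl)
  exact_mod_cast Nat.factorial_le (Nat.le_succ j)

lemma fact_le_Gamma (j : ℕ) (hj : 1 ≤ j) {t : ℝ} (h1 : (j : ℝ) ≤ t) :
    (Nat.factorial j : ℝ) ≤ Real.Gamma (t + 1) := by
  rcases eq_or_lt_of_le h1 with he | hlt
  · rw [← he]
    exact le_of_eq (Real.Gamma_nat_eq_factorial j).symm
  · have hj1 : (1 : ℝ) ≤ (j : ℝ) := by exact_mod_cast hj
    have hx : (1 : ℝ) ∈ Set.Ioi (0 : ℝ) := by norm_num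
    have hz : t + 1 ∈ Set.Ioi (0 : ℝ) := by simp; linarith
    have hs := Real.convexOn_Gamma.slope_mono_adjacent hx hz
      (show (1 : ℝ) < (j : ℝ) + 1 by linarith) (show (j : ℝ) + 1 < t + 1 by linarith)
    rw [Real.Gamma_one, Real.Gamma_nat_eq_factorial] at hs
    have hnum : (0 : ℝ) ≤ ((Nat.factorial j : ℝ) - 1) / ((j : ℝ) + 1 - 1) := by
      apply div_nonneg
      · have : 1 ≤ Nat.factorial j := Nat.one_le_iff_ne_zero.mpr (Nat.factorial_ne_zero j)
        have : (1 : ℝ) ≤ (Nat.factorial j : ℝ) := by exact_mod_cast this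
        linarith
      · linarith
    have h2 := le_trans hnum hs
    have hpos : (0 : ℝ) < t + 1 - ((j : ℝ) + 1) := by linarith
    have := (le_div_iff₀ hpos).mp h2
    linarith

lemma interval_lower {u : ℝ} (hu : 1 ≤ u) (k : ℕ) :
    u ^ k / (Nat.factorial (k + 1) : ℝ) ≤
      ∫ t in (k : ℝ)..(k : ℝ) + 1, u ^ t / Real.Gamma (t + 1) := by
  have hu0 : (0 : ℝ) < u := lt_of_lt_of_le one_pos hu
  have hconst : (∫ _ in (k : ℝ)..(k : ℝ) + 1, (u ^ k / (Nat.factorial (k + 1) : ℝ)))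
      = u ^ k / (Nat.factorial (k + 1) : ℝ) := by
    rw [intervalIntegral.integral_const]; simp
  rw [← hconst]
  apply intervalIntegral.integral_mono_on (by linarith)
    intervalIntegrable_const (aux_integrable hu0 k.cast_nonneg (by linarith))
  intro t ht
  obtain ⟨ht1, ht2⟩ := ht
  have ht0 : (0 : ℝ) ≤ t := le_trans k.cast_nonneg ht1
  have hgpos : 0 < Real.Gamma (t + 1) := Real.Gamma_pos_of_pos (by linarith)
  have hrp : (u : ℝ) ^ k ≤ u ^ t := by
    rw [← Real.rpow_natCast u k]
    exact Real.rpow_le_rpow_of_exponent_le hu ht1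
  exact div_le_div₀ (le_of_lt (Real.rpow_pos_of_pos hu0 t)) hrp hgpos (Gamma_le_fact k ht1 ht2)

lemma interval_upper {u : ℝ} (hu : 1 ≤ u) (k : ℕ) (hk : 1 ≤ k) :
    (∫ t in (k : ℝ)..(k : ℝ) + 1, u ^ t / Real.Gamma (t + 1)) ≤
      u ^ (k + 1) / (Nat.factorial k : ℝ) := by
  have hu0 : (0 : ℝ) < u := lt_of_lt_of_le one_pos hu
  have hconst : (∫ _ in (k : ℝ)..(k : ℝ) + 1, (u ^ (k + 1) / (Nat.factorial k : ℝ)))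
      = u ^ (k + 1) / (Nat.factorial k : ℝ) := by
    rw [intervalIntegral.integral_const]; simp
  rw [← hconst]
  apply intervalIntegral.integral_mono_on (by linarith)
    (aux_integrable hu0 k.cast_nonneg (by linarith)) intervalIntegrable_const
  intro t ht
  obtain ⟨ht1, ht2⟩ := ht
  have hfpos : (0 : ℝ) < (Nat.factorial k : ℝ) := by exact_mod_cast Nat.factorial_pos k
  have hrp : u ^ t ≤ (u : ℝ) ^ (k + 1) := by
    rw [← Real.rpow_natCast u (k + 1)]
    exact Real.rpow_le_rpow_of_exponent_le hu (by push_cast; linarith)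
  exact div_le_div₀ (by positivity) hrp hfpos (fact_le_Gamma k hk ht1)

lemma interval_upper0 {u m : ℝ} (hu : 1 ≤ u) (hm0 : 0 < m)
    (hmle : ∀ t : ℝ, 0 ≤ t → m ≤ Real.Gamma (t + 1)) :
    (∫ t in (0 : ℝ)..1, u ^ t / Real.Gamma (t + 1)) ≤ u / m := by
  have hu0 : (0 : ℝ) < u := lt_of_lt_of_le one_pos hu
  have hconst : (∫ _ in (0 : ℝ)..1, (u / m)) = u / m := by
    rw [intervalIntegral.integral_const]; simp
  rw [← hconst]
  apply intervalIntegral.integral_mono_on (by norm_num)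
    (aux_integrable hu0 le_rfl zero_le_one) intervalIntegrable_const
  intro t ht
  obtain ⟨ht1, ht2⟩ := ht
  have hrp : u ^ t ≤ u := by
    have := Real.rpow_le_rpow_of_exponent_le hu ht2
    rwa [Real.rpow_one] at this
  exact div_le_div₀ (by positivity) hrp hm0 (hmle t ht1)

/-- Let `m` be the minimum value of `Γ(t+1)` over `t ≥ 0`. For `n ≥ 3`, `x > 0`, `y > 0`
with `y(n-1)² ≥ 2x`:
`(2x/(y(n-1)²))(r̃(x,y,n) − x^n) ≤ ρ(x,y,n) ≤ (y(n-1)²/(2x))(r̃(x,y,n) + ((1−m)/m)x^n)`. -/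
theorem rho_between (m : ℝ)
    (hm : IsLeast ((fun t : ℝ => Real.Gamma (t + 1)) '' Set.Ici (0 : ℝ)) m)
    (n : ℕ) (hn : 3 ≤ n) (x y : ℝ) (hx : 0 < x) (hy : 0 < y)
    (h : y * ((n : ℝ) - 1) ^ 2 ≥ 2 * x) :
    (2 * x / (y * ((n : ℝ) - 1) ^ 2)) * (rtilde x y n - x ^ n) ≤ rho x y (n : ℝ) ∧
    rho x y (n : ℝ) ≤
      (y * ((n : ℝ) - 1) ^ 2 / (2 * x)) * (rtilde x y n + ((1 - m) / m) * x ^ n) := by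
  obtain ⟨p, rfl⟩ : ∃ p, n = p + 3 := ⟨n - 3, by omega⟩
  have hn1 : (1 : ℝ) ≤ ((p + 3 : ℕ) : ℝ) - 1 := by push_cast; linarith [Nat.cast_nonneg (α := ℝ) p]
  have hB : (0 : ℝ) < 2 * x := by linarith
  set u : ℝ := y * (((p + 3 : ℕ) : ℝ) - 1) ^ 2 / (2 * x) with hu_def
  have hu1 : (1 : ℝ) ≤ u := (one_le_div hB).mpr h
  have hu0 : (0 : ℝ) < u := lt_of_lt_of_le one_pos hu1
  have hxne : x ≠ 0 := hx.ne'
  -- facts about m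
  obtain ⟨t0, ht0, hmt0⟩ := hm.1
  have hm0 : 0 < m := by
    rw [← hmt0]
    exact Real.Gamma_pos_of_pos (by have := Set.mem_Ici.mp ht0; linarith)
  have hmle : ∀ t : ℝ, 0 ≤ t → m ≤ Real.Gamma (t + 1) := fun t ht => hm.2 ⟨t, ht, rfl⟩
  -- rtilde formula
  have hIcc : Finset.Icc 1 (p + 3) = Finset.image (· + 1) (Finset.range (p + 3)) := by
    ext k
    simp only [Finset.mem_Icc, Finset.mem_image, Finset.mem_range]
    constructor
    · rintro ⟨h1, h2⟩; exact ⟨k - 1, by omega, by omega⟩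
    · rintro ⟨a, ha, rfl⟩; omega
  have hrt : rtilde x y (p + 3)
      = x ^ (p + 3) * ∑ j ∈ Finset.range (p + 3), u ^ j / (Nat.factorial j : ℝ) := by
    rw [rtilde, if_neg (by omega), hIcc, Finset.sum_image (by intro a _ b _ hab; simp only at hab; omega)]
    rw [Finset.mul_sum,
      ← Finset.sum_range_reflect (fun j => x ^ (p + 3) * (u ^ j / (Nat.factorial j : ℝ))) (p + 3)]
    apply Finset.sum_congr rfl
    intro i hi
    have hi' : i < p + 3 := Finset.mem_range.mp hi
    have e1 : p + 3 - (i + 1) = p + 3 - 1 - i := by omega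
    rw [e1]
    set j := p + 3 - 1 - i with hj
    have hxsplit : x ^ (p + 3) = x ^ (i + 1) * x ^ j := by
      rw [← pow_add]; congr 1; omega
    have hupow : u ^ j = y ^ j * ((((p + 3 : ℕ) : ℝ) - 1) ^ 2) ^ j / (2 ^ j * x ^ j) := by
      rw [hu_def, div_pow, mul_pow, mul_pow]
    rw [hupow, hxsplit, pow_mul]
    have hfac : ((Nat.factorial j : ℝ)) ≠ 0 := by
      exact_mod_cast (Nat.factorial_ne_zero j)
    field_simp
  -- rho formula
  have hrho : rho x y ((p + 3 : ℕ) : ℝ)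
      = x ^ (p + 3) * ∫ t in (0 : ℝ)..(((p + 3 : ℕ) : ℝ) - 1), u ^ t / Real.Gamma (t + 1) := by
    rw [rho, Efun, Real.rpow_natCast, ← hu_def]
  -- split the integral
  have hsplit : (∑ k ∈ Finset.range (p + 2),
        ∫ t in (k : ℝ)..((k : ℝ) + 1), u ^ t / Real.Gamma (t + 1))
      = ∫ t in (0 : ℝ)..(((p + 3 : ℕ) : ℝ) - 1), u ^ t / Real.Gamma (t + 1) := by
    have hint : ∀ k, k < p + 2 → IntervalIntegrable (fun t => u ^ t / Real.Gamma (t + 1))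
        MeasureTheory.volume ((k : ℕ) : ℝ) (((k + 1 : ℕ)) : ℝ) := by
      intro k _
      have h2 : (((k + 1 : ℕ)) : ℝ) = (k : ℝ) + 1 := by push_cast; ring
      rw [h2]
      exact aux_integrable hu0 k.cast_nonneg (by linarith [Nat.cast_nonneg (α := ℝ) k])
    have hs := intervalIntegral.sum_integral_adjacent_intervals
      (a := fun i : ℕ => (i : ℝ)) hint
    simp only [Nat.cast_zero] at hs
    have e2 : (((p + 2 : ℕ)) : ℝ) = ((p + 3 : ℕ) : ℝ) - 1 := by push_cast; ring
    rw [e2] at hs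
    rw [← hs]
    apply Finset.sum_congr rfl
    intro k _
    congr 1
    push_cast; ring
  set S : ℝ := ∑ j ∈ Finset.range (p + 3), u ^ j / (Nat.factorial j : ℝ) with hS_def
  have hS1 : S = (∑ k ∈ Finset.range (p + 2), u ^ (k + 1) / (Nat.factorial (k + 1) : ℝ)) + 1 := by
    have := Finset.sum_range_succ' (fun j => u ^ j / (Nat.factorial j : ℝ)) (p + 2)
    simpa using this
  have hcoef : 2 * x / (y * (((p + 3 : ℕ) : ℝ) - 1) ^ 2) = 1 / u := by
    rw [hu_def, one_div_div]
  constructor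
  · -- lower bound
    rw [hcoef, hrt, hrho, ← hsplit, hS1]
    have hterm : ∀ k ∈ Finset.range (p + 2),
        u ^ k / (Nat.factorial (k + 1) : ℝ)
          ≤ ∫ t in (k : ℝ)..((k : ℝ) + 1), u ^ t / Real.Gamma (t + 1) :=
      fun k _ => interval_lower hu1 k
    have hsum := Finset.sum_le_sum hterm
    have hLHS : 1 / u * (x ^ (p + 3) *
          ((∑ k ∈ Finset.range (p + 2), u ^ (k + 1) / (Nat.factorial (k + 1) : ℝ)) + 1)
        - x ^ (p + 3))
        = x ^ (p + 3) * ∑ k ∈ Finset.range (p + 2), u ^ k / (Nat.factorial (k + 1) : ℝ) := by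
      rw [mul_add, mul_one, add_sub_cancel_right, ← mul_assoc, mul_comm (1/u), mul_assoc,
        Finset.mul_sum]
      congr 1
      apply Finset.sum_congr rfl
      intro k _
      have hfac : ((Nat.factorial (k + 1) : ℝ)) ≠ 0 := by
        exact_mod_cast (Nat.factorial_ne_zero (k + 1))
      field_simp
      ring
    rw [hLHS]
    exact mul_le_mul_of_nonneg_left hsum (by positivity)
  · -- upper bound
    have hcoef2 : y * (((p + 3 : ℕ) : ℝ) - 1) ^ 2 / (2 * x) = u := rfl
    rw [hrt, hrho, ← hsplit]
    -- bound the sum of integrals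
    have hsum_split := Finset.sum_range_succ'
      (fun k => ∫ t in (k : ℝ)..((k : ℝ) + 1), u ^ t / Real.Gamma (t + 1)) (p + 1)
    have hI0 : (∫ t in ((0 : ℕ) : ℝ)..(((0 : ℕ) : ℝ) + 1), u ^ t / Real.Gamma (t + 1)) ≤ u / m := by
      simp only [Nat.cast_zero, zero_add]
      exact interval_upper0 hu1 hm0 hmle
    have hIk : ∀ k ∈ Finset.range (p + 1),
        (∫ t in (((k + 1 : ℕ)) : ℝ)..((((k + 1 : ℕ)) : ℝ) + 1), u ^ t / Real.Gamma (t + 1))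
          ≤ u ^ (k + 2) / (Nat.factorial (k + 1) : ℝ) := by
      intro k _
      have := interval_upper hu1 (k + 1) (by omega)
      have ec : (((k + 1 : ℕ)) : ℝ) = (k : ℝ) + 1 := by push_cast; ring
      rw [ec] at this ⊢
      exact this
    have hIbound : (∑ k ∈ Finset.range (p + 2),
          ∫ t in (k : ℝ)..((k : ℝ) + 1), u ^ t / Real.Gamma (t + 1))
        ≤ u / m + ∑ k ∈ Finset.range (p + 1), u ^ (k + 2) / (Nat.factorial (k + 1) : ℝ) := by
      rw [show (p + 2) = (p + 1) + 1 from rfl, hsum_split]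
      have h1 := Finset.sum_le_sum hIk
      push_cast at h1 ⊢
      linarith [hI0, h1]
    -- compare with u * (S + (1-m)/m)
    have hfinal : u / m + (∑ k ∈ Finset.range (p + 1), u ^ (k + 2) / (Nat.factorial (k + 1) : ℝ))
        ≤ u * (S + (1 - m) / m) := by
      have hum : u / m = u + u * ((1 - m) / m) := by field_simp; ring
      have hfactor : (∑ k ∈ Finset.range (p + 1), u ^ (k + 2) / (Nat.factorial (k + 1) : ℝ))
          = u * ∑ k ∈ Finset.range (p + 1), u ^ (k + 1) / (Nat.factorial (k + 1) : ℝ) := by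
        rw [Finset.mul_sum]
        apply Finset.sum_congr rfl
        intro k _
        rw [show k + 2 = (k + 1) + 1 from rfl, pow_succ]
        ring
      have hS2 : (∑ j ∈ Finset.range (p + 2), u ^ j / (Nat.factorial j : ℝ))
          = (∑ k ∈ Finset.range (p + 1), u ^ (k + 1) / (Nat.factorial (k + 1) : ℝ)) + 1 := by
        have := Finset.sum_range_succ' (fun j => u ^ j / (Nat.factorial j : ℝ)) (p + 1)
        simpa using this
      have hSle : (∑ j ∈ Finset.range (p + 2), u ^ j / (Nat.factorial j : ℝ)) ≤ S := by
        rw [hS_def]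
        apply Finset.sum_le_sum_of_subset_of_nonneg
        · exact Finset.range_subset_range.mpr (by omega)
        · intro i _ _
          positivity
      rw [hum, hfactor]
      rw [hS2] at hSle
      nlinarith [hSle, hu0]
    calc x ^ (p + 3) * (∑ k ∈ Finset.range (p + 2),
            ∫ t in (k : ℝ)..((k : ℝ) + 1), u ^ t / Real.Gamma (t + 1))
        ≤ x ^ (p + 3) * (u * (S + (1 - m) / m)) := by
          apply mul_le_mul_of_nonneg_left (le_trans hIbound hfinal) (by positivity)
      _ = u * (x ^ (p + 3) * S + (1 - m) / m * x ^ (p + 3)) := by ring
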